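/- For every positive integer k, the set of consecutive integers {1, 2, ..., 4k+2} can be partitioned into 2k+1 pairs such that the set of pair sums is exactly the set of 2k+1 consecutive integers {3k+3, 3k+4, ..., 5k+3}. -/

import Mathlib

private def smF (k i : ℕ) : ℤ := if i ≤ k then 2*(i:ℤ)+1 else 2*((i:ℤ)-k)
private def bgF (k i : ℕ) : ℤ := if i ≤ k then 3*(k:ℤ)+2-i else 5*(k:ℤ)+3-i
private def pF (k i : ℕ) : Finset ℤ := {smF k i, bgF k i}

private lemma sm_bounds (k i : ℕ) (hi : i ≤ 2*k) : 1 ≤ smF k i ∧ smF k i ≤ 2*(k:ℤ)+1 := by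
  unfold smF; split <;> omega

private lemma bg_bounds (k i : ℕ) (hi : i ≤ 2*k) :
    2*(k:ℤ)+2 ≤ bgF k i ∧ bgF k i ≤ 4*(k:ℤ)+2 := by
  unfold bgF; split <;> omega

private lemma sm_ne_bg (k i : ℕ) (hi : i ≤ 2*k) : smF k i ≠ bgF k i := by
  have h1 := sm_bounds k i hi
  have h2 := bg_bounds k i hi
  omega

private lemma sm_inj (k i j : ℕ) (hi : i ≤ 2*k) (hj : j ≤ 2*k) (h : smF k i = smF k j) :
    i = j := by
  unfold smF at h; split at h <;> split at h <;> omega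

private lemma bg_inj (k i j : ℕ) (hi : i ≤ 2*k) (hj : j ≤ 2*k) (h : bgF k i = bgF k j) :
    i = j := by
  unfold bgF at h; split at h <;> split at h <;> omega

private lemma pF_sum (k i : ℕ) (hi : i ≤ 2*k) :
    (pF k i).sum id = 3*(k:ℤ)+3+i := by
  unfold pF
  rw [Finset.sum_pair (sm_ne_bg k i hi)]
  unfold smF bgF; split <;> simp <;> ring_nf <;> omega

theorem consecutive_pair_sums_4k_add_2 (k : ℕ) (hk : 0 < k) :
    ∃ P : Finset (Finset ℤ),
      P.card = 2 * k + 1 ∧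
      (∀ p ∈ P, p.card = 2) ∧
      (∀ p ∈ P, ∀ q ∈ P, p ≠ q → Disjoint p q) ∧
      P.biUnion id = Finset.Icc (1 : ℤ) (4 * (k : ℤ) + 2) ∧
      P.image (fun p => p.sum id) = Finset.Icc (3 * (k : ℤ) + 3) (5 * (k : ℤ) + 3) := by
  have hfinj : ∀ i ∈ Finset.range (2*k+1), ∀ j ∈ Finset.range (2*k+1),
      pF k i = pF k j → i = j := by
    intro i hi j hj h
    simp only [Finset.mem_range] at hi hj
    have hs : (pF k i).sum id = (pF k j).sum id := by rw [h]
    rw [pF_sum k i (by omega), pF_sum k j (by omega)] at hs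
    omega
  have hdisj : ∀ i j : ℕ, i ≤ 2*k → j ≤ 2*k → i ≠ j → Disjoint (pF k i) (pF k j) := by
    intro i j hi hj hij
    rw [Finset.disjoint_left]
    intro x hx hx'
    unfold pF at hx hx'
    simp only [Finset.mem_insert, Finset.mem_singleton] at hx hx'
    have b1 := sm_bounds k i hi
    have b2 := sm_bounds k j hj
    have b3 := bg_bounds k i hi
    have b4 := bg_bounds k j hj
    rcases hx with h | h <;> rcases hx' with h' | h' <;> subst h
    · exact hij (sm_inj k i j hi hj h')
    · omega
    · omega
    · exact hij (bg_inj k i j hi hj h')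
  refine ⟨(Finset.range (2*k+1)).image (pF k), ?_, ?_, ?_, ?_, ?_⟩
  · rw [Finset.card_image_of_injOn hfinj, Finset.card_range]
  · intro p hp
    simp only [Finset.mem_image, Finset.mem_range] at hp
    obtain ⟨i, hi, rfl⟩ := hp
    exact Finset.card_pair (sm_ne_bg k i (by omega))
  · intro p hp q hq hpq
    simp only [Finset.mem_image, Finset.mem_range] at hp hq
    obtain ⟨i, hi, rfl⟩ := hp
    obtain ⟨j, hj, rfl⟩ := hq
    exact hdisj i j (by omega) (by omega) (fun h => hpq (by rw [h]))
  · apply Finset.eq_of_subset_of_card_le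
    · intro x hx
      simp only [Finset.mem_biUnion, Finset.mem_image, Finset.mem_range, id] at hx
      obtain ⟨p, ⟨i, hi, rfl⟩, hxp⟩ := hx
      unfold pF at hxp
      simp only [Finset.mem_insert, Finset.mem_singleton] at hxp
      have b1 := sm_bounds k i (by omega)
      have b3 := bg_bounds k i (by omega)
      rw [Finset.mem_Icc]
      rcases hxp with rfl | rfl <;> omega
    · rw [Finset.image_biUnion]
      have hcb : ((Finset.range (2*k+1)).biUnion fun i => id (pF k i)).card = 2*(2*k+1) := by
        rw [Finset.card_biUnion]
        · have h2 : ∀ i ∈ Finset.range (2*k+1), (id (pF k i)).card = 2 := by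
            intro i hi
            simp only [Finset.mem_range] at hi
            exact Finset.card_pair (sm_ne_bg k i (by omega))
          rw [Finset.sum_congr rfl h2, Finset.sum_const, Finset.card_range, smul_eq_mul]
          omega
        · intro i hi j hj hij
          simp only [Finset.coe_range, Set.mem_Iio] at hi hj
          exact hdisj i j (by omega) (by omega) hij
      rw [hcb, Int.card_Icc]
      omega
  · rw [Finset.image_image]
    ext x
    simp only [Finset.mem_image, Finset.mem_range, Function.comp, Finset.mem_Icc]
    constructor
    · rintro ⟨i, hi, rfl⟩
      rw [pF_sum k i (by omega)]
      omega
    · intro hx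
      refine ⟨(x - 3*(k:ℤ) - 3).toNat, by omega, ?_⟩
      rw [pF_sum k _ (by omega)]
      omega
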